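/- arXiv:2212.06306 — 2 statements merged into one kernel-verified Lean document; each statement's English description precedes it below -/
import Mathlib

section
/- Let β < 0 and let T_β = {(x,y) ∈ ℝ² : x ≥ 1, 0 ≤ y ≤ x^β}. Then T_β is Lipschitz normally embedded with constant 2: for all P, Q ∈ T_β, d_inn(P,Q) ≤ 2‖P - Q‖. -/
set_option maxHeartbeats 1000000

open Set


/-- The inner (length/geodesic) distance on a subset `X`. -/
noncomputable def innerDist {E : Type*} [PseudoEMetricSpace E] (X : Set E) (x y : E) : ENNReal :=
  ⨅ γ : {γ : ℝ → E // ContinuousOn γ (Set.Icc 0 1) ∧ Set.MapsTo γ (Set.Icc 0 1) X ∧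
      γ 0 = x ∧ γ 1 = y}, eVariationOn γ.1 (Set.Icc 0 1)

/-- The strip T_β = {(x,y) ∈ ℝ² : x ≥ 1, 0 ≤ y ≤ x^β}. -/
def Tstrip (β : ℝ) : Set (EuclideanSpace ℝ (Fin 2)) :=
  {p | 1 ≤ p 0 ∧ 0 ≤ p 1 ∧ p 1 ≤ (p 0) ^ β}

lemma seg_lip {E : Type*} [NormedAddCommGroup E] [NormedSpace ℝ E] (A v : E) :
    LipschitzWith ‖v‖₊ (fun t : ℝ => A + t • v) := by
  apply LipschitzWith.of_dist_le_mul
  intro x y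
  have : (A + x • v) - (A + y • v) = (x - y) • v := by
    rw [sub_smul]; abel
  rw [dist_eq_norm, this, norm_smul, Real.norm_eq_abs, ← Real.dist_eq, mul_comm]
  rfl

lemma seg_evar {E : Type*} [NormedAddCommGroup E] [NormedSpace ℝ E] (A v : E) {a b : ℝ}
    (hab : a ≤ b) :
    eVariationOn (fun t : ℝ => A + t • v) (Set.Icc a b) ≤ ENNReal.ofReal (‖v‖ * (b - a)) := by
  have h1 : eVariationOn (fun t : ℝ => A + t • v) (Set.Icc a b)
      ≤ ‖v‖₊ * eVariationOn (id : ℝ → ℝ) (Set.Icc a b) := by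
    have := ((seg_lip A v).lipschitzOnWith (s := (univ : Set ℝ))).comp_eVariationOn_le
      (Set.mapsTo_univ (id : ℝ → ℝ) (Set.Icc a b))
    simpa using this
  have h2 : eVariationOn (id : ℝ → ℝ) (Set.Icc a b) ≤ ENNReal.ofReal (b - a) := by
    have := (monotoneOn_id (s := Set.Icc a b)).eVariationOn_le
      (Set.left_mem_Icc.2 hab) (Set.right_mem_Icc.2 hab)
    simpa using this
  calc eVariationOn (fun t : ℝ => A + t • v) (Set.Icc a b)
      ≤ ‖v‖₊ * eVariationOn (id : ℝ → ℝ) (Set.Icc a b) := h1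
    _ ≤ ‖v‖₊ * ENNReal.ofReal (b - a) := by exact mul_le_mul_right h2 _
    _ = ENNReal.ofReal ‖v‖ * ENNReal.ofReal (b - a) := by rw [ofReal_norm, enorm_eq_nnnorm]
    _ = ENNReal.ofReal (‖v‖ * (b - a)) := (ENNReal.ofReal_mul (norm_nonneg v)).symm

/-- For β < 0, T_β is LNE with constant 2. -/
theorem stmt4 (β : ℝ) (hβ : β < 0) :
    ∀ P ∈ Tstrip β, ∀ Q ∈ Tstrip β,
      innerDist (Tstrip β) P Q ≤ ENNReal.ofReal (2 * ‖P - Q‖) := by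
  intro P hP Q hQ
  obtain ⟨hP1, hP2, hP3⟩ := hP
  obtain ⟨hQ1, hQ2, hQ3⟩ := hQ
  set h : ℝ := min (P 1) (Q 1) with hh
  have hh0 : 0 ≤ h := le_min hP2 hQ2
  have hhP : h ≤ P 1 := min_le_left _ _
  have hhQ : h ≤ Q 1 := min_le_right _ _
  -- h is below the graph over [min p0 q0, max p0 q0]
  have hmax : h ≤ (max (P 0) (Q 0)) ^ β := by
    rcases le_total (P 0) (Q 0) with hc | hc
    · rw [max_eq_right hc]; exact hhQ.trans hQ3
    · rw [max_eq_left hc]; exact hhP.trans hP3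
  set w1 : EuclideanSpace ℝ (Fin 2) := EuclideanSpace.single 1 (h - P 1) with hw1
  set w0 : EuclideanSpace ℝ (Fin 2) := EuclideanSpace.single 0 (Q 0 - P 0) with hw0
  set w2 : EuclideanSpace ℝ (Fin 2) := EuclideanSpace.single 1 (Q 1 - h) with hw2
  set γ : ℝ → EuclideanSpace ℝ (Fin 2) := fun t =>
    P + (min 1 (3*t)) • w1 + (max 0 (min 1 (3*t-1))) • w0 + (max 0 (3*t-2)) • w2 with hγ
  have hcont : Continuous γ := by
    apply Continuous.add
    apply Continuous.add
    apply Continuous.add continuous_const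
    · exact (continuous_const.min (continuous_const.mul continuous_id)).smul continuous_const
    · exact (continuous_const.max (continuous_const.min
        ((continuous_const.mul continuous_id).sub continuous_const))).smul continuous_const
    · exact (continuous_const.max ((continuous_const.mul continuous_id).sub
        continuous_const)).smul continuous_const
  have happ0 : ∀ t : ℝ, γ t 0 = P 0 + (max 0 (min 1 (3*t-1))) * (Q 0 - P 0) := by
    intro t
    simp [hγ, hw0, hw1, hw2, PiLp.add_apply, PiLp.smul_apply, EuclideanSpace.single_apply]
  have happ1 : ∀ t : ℝ, γ t 1 = P 1 + (min 1 (3*t)) * (h - P 1) + (max 0 (3*t-2)) * (Q 1 - h) := by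
    intro t
    simp [hγ, hw0, hw1, hw2, PiLp.add_apply, PiLp.smul_apply, EuclideanSpace.single_apply]
  have hγ0 : γ 0 = P := by
    ext i
    fin_cases i
    · rw [show ((⟨0, by norm_num⟩ : Fin 2)) = (0 : Fin 2) from rfl, happ0]; norm_num
    · rw [show ((⟨1, by norm_num⟩ : Fin 2)) = (1 : Fin 2) from rfl, happ1]; norm_num
  have hγ1 : γ 1 = Q := by
    ext i
    fin_cases i
    · rw [show ((⟨0, by norm_num⟩ : Fin 2)) = (0 : Fin 2) from rfl, happ0]; norm_num
    · rw [show ((⟨1, by norm_num⟩ : Fin 2)) = (1 : Fin 2) from rfl, happ1]; norm_num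
  have hmaps : MapsTo γ (Icc 0 1) (Tstrip β) := by
    rintro t ⟨ht0, ht1⟩
    rcases le_or_gt (3*t) 1 with hc1 | hc1
    · -- first vertical segment
      have e0 : γ t 0 = P 0 := by
        rw [happ0, max_eq_left ((min_le_right 1 (3*t-1)).trans (by linarith))]; ring
      have e1 : γ t 1 = P 1 + (3*t) * (h - P 1) := by
        rw [happ1, min_eq_right hc1, max_eq_left (by linarith : 3*t-2 ≤ (0:ℝ))]; ring
      refine ⟨?_, ?_, ?_⟩
      · rw [e0]; exact hP1
      · rw [e1]; nlinarith
      · rw [e0, e1]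
        have : P 1 + (3*t) * (h - P 1) ≤ P 1 := by nlinarith
        linarith [hP3]
    · rcases le_or_gt (3*t) 2 with hc2 | hc2
      · -- horizontal segment
        set s : ℝ := max 0 (min 1 (3*t-1)) with hs
        have hs0 : 0 ≤ s := le_max_left _ _
        have hs1 : s ≤ 1 := max_le zero_le_one (min_le_left _ _)
        have e0 : γ t 0 = P 0 + s * (Q 0 - P 0) := by rw [happ0]
        have e1 : γ t 1 = h := by
          rw [happ1, min_eq_left hc1.le, max_eq_left (by linarith : 3*t-2 ≤ (0:ℝ))]; ring
        have hX1 : 1 ≤ γ t 0 := by rw [e0]; nlinarith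
        have hXmax : γ t 0 ≤ max (P 0) (Q 0) := by
          rw [e0]
          rcases le_total (P 0) (Q 0) with hc | hc
          · rw [max_eq_right hc]; nlinarith
          · rw [max_eq_left hc]; nlinarith
        refine ⟨hX1, ?_, ?_⟩
        · rw [e1]; exact hh0
        · rw [e1]
          calc h ≤ (max (P 0) (Q 0)) ^ β := hmax
            _ ≤ (γ t 0) ^ β := Real.rpow_le_rpow_of_nonpos (by linarith) hXmax hβ.le
      · -- last vertical segment
        have e0 : γ t 0 = Q 0 := by
          rw [happ0, min_eq_left (by linarith : (1:ℝ) ≤ 3*t-1),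
            max_eq_right (zero_le_one (α := ℝ))]; ring
        have e1 : γ t 1 = h + (3*t-2) * (Q 1 - h) := by
          rw [happ1, min_eq_left (by linarith : (1:ℝ) ≤ 3*t),
            max_eq_right (by linarith : (0:ℝ) ≤ 3*t-2)]; ring
        refine ⟨?_, ?_, ?_⟩
        · rw [e0]; exact hQ1
        · rw [e1]; nlinarith
        · rw [e0, e1]
          have : h + (3*t-2) * (Q 1 - h) ≤ Q 1 := by nlinarith
          linarith [hQ3]
  -- split the variation into three pieces
  have hsplit1 := eVariationOn.Icc_add_Icc γ (s := (univ : Set ℝ))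
    (by norm_num : (0:ℝ) ≤ 1/3) (by norm_num : (1/3:ℝ) ≤ 2/3) (mem_univ _)
  have hsplit2 := eVariationOn.Icc_add_Icc γ (s := (univ : Set ℝ))
    (by norm_num : (0:ℝ) ≤ 2/3) (by norm_num : (2/3:ℝ) ≤ 1) (mem_univ _)
  simp only [univ_inter] at hsplit1 hsplit2
  have hb1 : eVariationOn γ (Icc 0 (1/3)) ≤ ENNReal.ofReal (P 1 - h) := by
    have heq : EqOn γ (fun t : ℝ => P + t • ((3:ℝ) • w1)) (Icc 0 (1/3)) := by
      rintro t ⟨ht0, ht1⟩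
      show P + (min 1 (3*t)) • w1 + (max 0 (min 1 (3*t-1))) • w0 + (max 0 (3*t-2)) • w2
        = P + t • ((3:ℝ) • w1)
      rw [min_eq_right (by linarith), max_eq_left ((min_le_right 1 (3*t-1)).trans (by linarith)),
        max_eq_left (by linarith : 3*t-2 ≤ (0:ℝ)), zero_smul, zero_smul, add_zero, add_zero,
        smul_smul, mul_comm]
    rw [eVariationOn.eq_of_eqOn heq]
    refine (seg_evar P ((3:ℝ) • w1) (by norm_num : (0:ℝ) ≤ 1/3)).trans_eq ?_
    congr 1
    rw [norm_smul, hw1, EuclideanSpace.norm_single, Real.norm_eq_abs, Real.norm_eq_abs,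
      abs_of_nonneg (by norm_num : (0:ℝ) ≤ 3), abs_of_nonpos (by linarith : h - P 1 ≤ 0)]
    ring
  have hb2 : eVariationOn γ (Icc (1/3) (2/3)) ≤ ENNReal.ofReal |Q 0 - P 0| := by
    have heq : EqOn γ (fun t : ℝ => (P + w1 - w0) + t • ((3:ℝ) • w0)) (Icc (1/3) (2/3)) := by
      rintro t ⟨ht0, ht1⟩
      show P + (min 1 (3*t)) • w1 + (max 0 (min 1 (3*t-1))) • w0 + (max 0 (3*t-2)) • w2
        = (P + w1 - w0) + t • ((3:ℝ) • w0)
      rw [min_eq_left (by linarith), min_eq_right (by linarith : 3*t-1 ≤ (1:ℝ)),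
        max_eq_right (by linarith : (0:ℝ) ≤ 3*t-1),
        max_eq_left (by linarith : 3*t-2 ≤ (0:ℝ)), zero_smul, add_zero, one_smul,
        smul_smul]
      have : (3*t-1) • w0 = (t*3) • w0 - w0 := by
        rw [sub_smul, mul_comm]; norm_num
      rw [this]; abel
    rw [eVariationOn.eq_of_eqOn heq]
    refine (seg_evar (P + w1 - w0) ((3:ℝ) • w0) (by norm_num : (1/3:ℝ) ≤ 2/3)).trans_eq ?_
    congr 1
    rw [norm_smul, hw0, EuclideanSpace.norm_single, Real.norm_eq_abs, Real.norm_eq_abs,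
      abs_of_nonneg (by norm_num : (0:ℝ) ≤ 3)]
    ring
  have hb3 : eVariationOn γ (Icc (2/3) 1) ≤ ENNReal.ofReal (Q 1 - h) := by
    have heq : EqOn γ (fun t : ℝ => (P + w1 + w0 - (2:ℝ) • w2) + t • ((3:ℝ) • w2))
        (Icc (2/3) 1) := by
      rintro t ⟨ht0, ht1⟩
      show P + (min 1 (3*t)) • w1 + (max 0 (min 1 (3*t-1))) • w0 + (max 0 (3*t-2)) • w2
        = (P + w1 + w0 - (2:ℝ) • w2) + t • ((3:ℝ) • w2)
      rw [min_eq_left (by linarith), min_eq_left (by linarith : (1:ℝ) ≤ 3*t-1),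
        max_eq_right (zero_le_one (α := ℝ)),
        max_eq_right (by linarith : (0:ℝ) ≤ 3*t-2), one_smul, one_smul, smul_smul]
      have : (3*t-2) • w2 = (t*3) • w2 - (2:ℝ) • w2 := by
        rw [sub_smul, mul_comm]
      rw [this]; abel
    rw [eVariationOn.eq_of_eqOn heq]
    refine (seg_evar _ ((3:ℝ) • w2) (by norm_num : (2/3:ℝ) ≤ 1)).trans_eq ?_
    congr 1
    rw [norm_smul, hw2, EuclideanSpace.norm_single, Real.norm_eq_abs, Real.norm_eq_abs,
      abs_of_nonneg (by norm_num : (0:ℝ) ≤ 3), abs_of_nonneg (by linarith : 0 ≤ Q 1 - h)]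
    ring
  have htotal : eVariationOn γ (Icc 0 1)
      ≤ ENNReal.ofReal ((P 1 - h) + |Q 0 - P 0| + (Q 1 - h)) := by
    rw [← hsplit2, ← hsplit1]
    calc eVariationOn γ (Icc 0 (1/3)) + eVariationOn γ (Icc (1/3) (2/3))
          + eVariationOn γ (Icc (2/3) 1)
        ≤ ENNReal.ofReal (P 1 - h) + ENNReal.ofReal |Q 0 - P 0| + ENNReal.ofReal (Q 1 - h) :=
          add_le_add (add_le_add hb1 hb2) hb3
      _ = ENNReal.ofReal ((P 1 - h) + |Q 0 - P 0| + (Q 1 - h)) := by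
          rw [← ENNReal.ofReal_add (by linarith) (abs_nonneg _),
            ← ENNReal.ofReal_add (by have := abs_nonneg (Q 0 - P 0); linarith) (by linarith)]
  -- the real inequality
  have hnorm : ‖P - Q‖ = Real.sqrt ((P 0 - Q 0)^2 + (P 1 - Q 1)^2) := by
    rw [EuclideanSpace.norm_eq]
    simp [Fin.sum_univ_two, Real.norm_eq_abs, sq_abs]
  have habs0 : |P 0 - Q 0| ≤ ‖P - Q‖ := by
    rw [hnorm, ← Real.sqrt_sq_eq_abs]
    exact Real.sqrt_le_sqrt (by nlinarith [sq_nonneg (P 1 - Q 1)])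
  have habs1 : |P 1 - Q 1| ≤ ‖P - Q‖ := by
    rw [hnorm, ← Real.sqrt_sq_eq_abs]
    exact Real.sqrt_le_sqrt (by nlinarith [sq_nonneg (P 0 - Q 0)])
  have hreal : (P 1 - h) + |Q 0 - P 0| + (Q 1 - h) ≤ 2 * ‖P - Q‖ := by
    have hsum : (P 1 - h) + (Q 1 - h) = |P 1 - Q 1| := by
      rcases le_total (P 1) (Q 1) with hc | hc
      · rw [hh, min_eq_left hc, abs_of_nonpos (by linarith)]; ring
      · rw [hh, min_eq_right hc, abs_of_nonneg (by linarith)]; ring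
    rw [abs_sub_comm (Q 0) (P 0)]
    linarith
  -- conclusion
  refine le_trans (iInf_le _ ⟨γ, hcont.continuousOn, hmaps, hγ0, hγ1⟩) ?_
  exact htotal.trans (ENNReal.ofReal_le_ofReal hreal)
end

section
/- For β ≤ 1 and Γ₁ = {(x,0) : x ≥ 1}, Γ₂ = {(x, x^β) : x ≥ 1} in ℝ², and any K > 1, the function f(r) = dist(A_r^K(Γ₁), A_r^K(Γ₂)) satisfies log f(r)/log r → β as r → ∞, where A_r^K(X) = {y ∈ X : r/K ≤ ‖y‖ ≤ Kr}. Hence the contact at infinity Cont(Γ₁, Γ₂) equals β. -/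
/-- The distance between two subsets: inf{‖x − y‖ : x ∈ X, y ∈ Y}. -/
noncomputable def setDist {E : Type*} [SeminormedAddCommGroup E] (X Y : Set E) : ℝ :=
  sInf ((fun p : E × E => dist p.1 p.2) '' X ×ˢ Y)

/-- The annular piece A_r^K(X) = {y ∈ X : r/K ≤ ‖y‖ ≤ Kr}. -/
def annPiece {E : Type*} [SeminormedAddCommGroup E] (K r : ℝ) (X : Set E) : Set E :=
  {y ∈ X | r / K ≤ ‖y‖ ∧ ‖y‖ ≤ K * r}

noncomputable def mk2 (a b : ℝ) : EuclideanSpace ℝ (Fin 2) := WithLp.toLp 2 ![a, b]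

lemma norm2 (p : EuclideanSpace ℝ (Fin 2)) : ‖p‖ = Real.sqrt ((p 0)^2 + (p 1)^2) := by
  rw [EuclideanSpace.norm_eq]; simp [Fin.sum_univ_two, sq_abs]

lemma dist2 (p q : EuclideanSpace ℝ (Fin 2)) :
    dist p q = Real.sqrt ((p 0 - q 0)^2 + (p 1 - q 1)^2) := by
  rw [EuclideanSpace.dist_eq]; simp [Fin.sum_univ_two, Real.dist_eq, sq_abs]

lemma abs_fst_le_norm (p : EuclideanSpace ℝ (Fin 2)) : |p 0| ≤ ‖p‖ := by
  rw [norm2]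
  calc |p 0| = Real.sqrt ((p 0)^2) := (Real.sqrt_sq_eq_abs _).symm
  _ ≤ _ := Real.sqrt_le_sqrt (by nlinarith [sq_nonneg (p 1)])

lemma abs_snd_le_dist (p q : EuclideanSpace ℝ (Fin 2)) : |p 1 - q 1| ≤ dist p q := by
  rw [dist2]
  calc |p 1 - q 1| = Real.sqrt ((p 1 - q 1)^2) := (Real.sqrt_sq_eq_abs _).symm
  _ ≤ _ := Real.sqrt_le_sqrt (by nlinarith [sq_nonneg (p 0 - q 0)])

lemma aux_tendsto (a b : ℝ) :
    Filter.Tendsto (fun r : ℝ => (a + b * Real.log r) / Real.log r)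
      Filter.atTop (nhds b) := by
  have h0 : Filter.Tendsto (fun r : ℝ => a / Real.log r + b) Filter.atTop (nhds (0 + b)) :=
    (tendsto_const_nhds.div_atTop Real.tendsto_log_atTop).add tendsto_const_nhds
  rw [zero_add] at h0
  apply h0.congr'
  filter_upwards [Filter.eventually_ge_atTop (2:ℝ)] with r hr
  have hlog : Real.log r ≠ 0 := by
    have := Real.log_pos (by linarith : (1:ℝ) < r); linarith
  field_simp

/-- Lower bound: any point of the second annular piece has second coordinate `x^β`
with `r/(√2 K) ≤ x ≤ K r`, hence the distance is at least `c · r^β`. -/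
lemma lower_bound (β K : ℝ) (hβ : β ≤ 1) (hK : 1 < K) (r : ℝ) (hr : 0 < r)
    (p q : EuclideanSpace ℝ (Fin 2))
    (hp : p ∈ annPiece K r {p : EuclideanSpace ℝ (Fin 2) | 1 ≤ p 0 ∧ p 1 = 0})
    (hq : q ∈ annPiece K r {p : EuclideanSpace ℝ (Fin 2) | 1 ≤ p 0 ∧ p 1 = (p 0) ^ β}) :
    min ((Real.sqrt 2 * K) ^ (-β)) (K ^ β) * r ^ β ≤ dist p q := by
  have hK0 : (0:ℝ) < K := by linarith
  obtain ⟨⟨hp1, hp2⟩, -, -⟩ := hp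
  obtain ⟨⟨hq1, hq2⟩, hql, hqu⟩ := hq
  set x := q 0 with hxdef
  have hx0 : (0:ℝ) < x := by linarith
  have hs2 : (0:ℝ) < Real.sqrt 2 := by positivity
  have hxb_le : x ^ β ≤ x := by
    calc x ^ β ≤ x ^ (1:ℝ) := Real.rpow_le_rpow_of_exponent_le hq1 hβ
    _ = x := Real.rpow_one x
  have hxb_pos : 0 < x ^ β := Real.rpow_pos_of_pos hx0 β
  -- ‖q‖ ≤ √2 x
  have hnq : ‖q‖ ≤ Real.sqrt 2 * x := by
    rw [norm2, hq2]
    calc Real.sqrt (x ^ 2 + (x ^ β) ^ 2) ≤ Real.sqrt (2 * x ^ 2) :=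
          Real.sqrt_le_sqrt (by nlinarith)
    _ = Real.sqrt 2 * Real.sqrt (x ^ 2) := Real.sqrt_mul (by norm_num) _
    _ = Real.sqrt 2 * x := by rw [Real.sqrt_sq hx0.le]
  have hxlow : r / (Real.sqrt 2 * K) ≤ x := by
    have h2 : r / K ≤ Real.sqrt 2 * x := le_trans hql hnq
    rw [div_le_iff₀ (by positivity)] at h2 ⊢
    nlinarith
  have hxhigh : x ≤ K * r :=
    le_trans (le_trans (le_abs_self x) (abs_fst_le_norm q)) hqu
  -- x^β ≥ c r^β
  have hmain : min ((Real.sqrt 2 * K) ^ (-β)) (K ^ β) * r ^ β ≤ x ^ β := by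
    rcases le_or_gt 0 β with h0 | h0
    · have key : (r / (Real.sqrt 2 * K)) ^ β ≤ x ^ β :=
        Real.rpow_le_rpow (by positivity) hxlow h0
      have heq : (r / (Real.sqrt 2 * K)) ^ β = (Real.sqrt 2 * K) ^ (-β) * r ^ β := by
        rw [Real.div_rpow hr.le (by positivity), Real.rpow_neg (by positivity),
          div_eq_inv_mul]
      calc min ((Real.sqrt 2 * K) ^ (-β)) (K ^ β) * r ^ β
          ≤ (Real.sqrt 2 * K) ^ (-β) * r ^ β := by
            apply mul_le_mul_of_nonneg_right (min_le_left _ _)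
              (Real.rpow_nonneg hr.le β)
      _ = (r / (Real.sqrt 2 * K)) ^ β := heq.symm
      _ ≤ x ^ β := key
    · have key : (K * r) ^ β ≤ x ^ β :=
        Real.rpow_le_rpow_of_nonpos hx0 hxhigh h0.le
      have heq : (K * r) ^ β = K ^ β * r ^ β := Real.mul_rpow hK0.le hr.le
      calc min ((Real.sqrt 2 * K) ^ (-β)) (K ^ β) * r ^ β
          ≤ K ^ β * r ^ β := by
            apply mul_le_mul_of_nonneg_right (min_le_right _ _)
              (Real.rpow_nonneg hr.le β)
      _ = (K * r) ^ β := heq.symm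
      _ ≤ x ^ β := key
  have hfin : x ^ β ≤ dist p q := by
    have h := abs_snd_le_dist p q
    rw [hp2, hq2] at h
    rwa [zero_sub, abs_neg, abs_of_pos hxb_pos] at h
  linarith

/-- For β ≤ 1, Γ₁ = {(x,0) : x ≥ 1}, Γ₂ = {(x,x^β) : x ≥ 1} and any K > 1,
log dist(A_r^K(Γ₁), A_r^K(Γ₂)) / log r → β as r → ∞; hence Cont(Γ₁,Γ₂) = β. -/
theorem stmt16 (β : ℝ) (hβ : β ≤ 1) (K : ℝ) (hK : 1 < K) :
    Filter.Tendsto (fun r : ℝ =>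
        Real.log (setDist
          (annPiece K r {p : EuclideanSpace ℝ (Fin 2) | 1 ≤ p 0 ∧ p 1 = 0})
          (annPiece K r {p : EuclideanSpace ℝ (Fin 2) | 1 ≤ p 0 ∧ p 1 = (p 0) ^ β})) /
        Real.log r)
      Filter.atTop (nhds β) := by
  have hK0 : (0:ℝ) < K := by linarith
  have hs2 : (0:ℝ) < Real.sqrt 2 := by positivity
  set c : ℝ := min ((Real.sqrt 2 * K) ^ (-β)) (K ^ β) with hcdef
  have hc : 0 < c :=
    lt_min (Real.rpow_pos_of_pos (by positivity) _) (Real.rpow_pos_of_pos hK0 _)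
  set Γ₁ : Set (EuclideanSpace ℝ (Fin 2)) := {p | 1 ≤ p 0 ∧ p 1 = 0} with hΓ₁
  set Γ₂ : Set (EuclideanSpace ℝ (Fin 2)) := {p | 1 ≤ p 0 ∧ p 1 = (p 0) ^ β} with hΓ₂
  -- eventual smallness of r^(β-1) when β < 1
  have hev2 : ∀ᶠ r : ℝ in Filter.atTop, β < 1 → r ^ (β - 1) ≤ K - 1 := by
    rcases lt_or_ge β 1 with h1 | h1
    · have ht : Filter.Tendsto (fun x : ℝ => x ^ (β - 1)) Filter.atTop (nhds 0) := by
        have := tendsto_rpow_neg_atTop (y := 1 - β) (by linarith)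
        simpa [neg_sub] using this
      filter_upwards [ht.eventually_lt_const (by linarith : (0:ℝ) < K - 1)] with r h _
      exact h.le
    · filter_upwards with r h; linarith
  -- main two-sided estimate
  have key : ∀ᶠ r : ℝ in Filter.atTop,
      c * r ^ β ≤ setDist (annPiece K r Γ₁) (annPiece K r Γ₂) ∧
      setDist (annPiece K r Γ₁) (annPiece K r Γ₂) ≤ (2 * K) * r ^ β := by
    filter_upwards [Filter.eventually_ge_atTop (Real.sqrt 2), hev2,
      Filter.eventually_gt_atTop (1:ℝ)] with r hrs2 hrK hr1
    have hr0 : (0:ℝ) < r := by linarith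
    have hrb : (0:ℝ) < r ^ β := Real.rpow_pos_of_pos hr0 β
    -- the witness point on Γ₁
    have hp : mk2 r 0 ∈ annPiece K r Γ₁ := by
      refine ⟨⟨by simpa [mk2] using hr1.le, by simp [mk2]⟩, ?_, ?_⟩ <;>
      · have : ‖mk2 r 0‖ = r := by
          rw [norm2]; simp [mk2]; rw [Real.sqrt_sq hr0.le]
        rw [this]
        first
        | exact div_le_self hr0.le hK.le
        | exact le_mul_of_one_le_left hr0.le hK.le
    -- a witness point on Γ₂ close to it
    obtain ⟨q, hq, hdq⟩ : ∃ q, q ∈ annPiece K r Γ₂ ∧ dist (mk2 r 0) q ≤ (2 * K) * r ^ β := by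
      rcases eq_or_lt_of_le hβ with hb1 | hb1
      · -- β = 1 : take q = (r/√2, r/√2)
        subst hb1
        refine ⟨mk2 (r / Real.sqrt 2) (r / Real.sqrt 2), ⟨⟨?_, ?_⟩, ?_, ?_⟩, ?_⟩
        · show (1:ℝ) ≤ r / Real.sqrt 2
          rw [le_div_iff₀ hs2]; simpa using hrs2
        · show r / Real.sqrt 2 = (r / Real.sqrt 2) ^ (1:ℝ)
          rw [Real.rpow_one]
        all_goals
          have hnq : ‖mk2 (r / Real.sqrt 2) (r / Real.sqrt 2)‖ = r := by
            rw [norm2]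
            have h2 : (r / Real.sqrt 2) ^ 2 + (r / Real.sqrt 2) ^ 2 = r ^ 2 := by
              rw [div_pow, Real.sq_sqrt (by norm_num : (0:ℝ) ≤ 2)]
              ring
            simp only [mk2]
            rw [show (![r / Real.sqrt 2, r / Real.sqrt 2] : Fin 2 → ℝ) 0 = r / Real.sqrt 2 from rfl,
              show (![r / Real.sqrt 2, r / Real.sqrt 2] : Fin 2 → ℝ) 1 = r / Real.sqrt 2 from rfl,
              h2, Real.sqrt_sq hr0.le]
        · rw [hnq]; exact div_le_self hr0.le hK.le
        · rw [hnq]; exact le_mul_of_one_le_left hr0.le hK.le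
        · have h1 : dist (mk2 r 0) (mk2 (r / Real.sqrt 2) (r / Real.sqrt 2)) ≤
              ‖mk2 r 0‖ + ‖mk2 (r / Real.sqrt 2) (r / Real.sqrt 2)‖ :=
            dist_le_norm_add_norm _ _
          rw [hnq] at h1
          have h2 : ‖mk2 r 0‖ = r := by
            rw [norm2]; simp [mk2]; rw [Real.sqrt_sq hr0.le]
          rw [h2] at h1
          have : (2 * K) * r ^ (1:ℝ) = 2 * K * r := by rw [Real.rpow_one]
          rw [this]; nlinarith
      · -- β < 1 : take q = (r, r^β)
        have hrbK : r ^ β ≤ (K - 1) * r := by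
          have h1 : r ^ β = r ^ (β - 1) * r := by
            rw [← Real.rpow_add_one hr0.ne' (β - 1)]
            norm_num
          rw [h1]
          apply mul_le_mul_of_nonneg_right (hrK hb1) hr0.le
        refine ⟨mk2 r (r ^ β), ⟨⟨?_, ?_⟩, ?_, ?_⟩, ?_⟩
        · show (1:ℝ) ≤ r; exact hr1.le
        · show r ^ β = r ^ β; rfl
        · -- lower norm bound
          have : r ≤ ‖mk2 r (r ^ β)‖ := by
            rw [norm2]
            calc r = Real.sqrt (r ^ 2) := (Real.sqrt_sq hr0.le).symm
            _ ≤ _ := Real.sqrt_le_sqrt (by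
                have : (0:ℝ) ≤ (mk2 r (r ^ β) 1) ^ 2 := sq_nonneg _
                show r ^ 2 ≤ (mk2 r (r ^ β) 0) ^ 2 + (mk2 r (r ^ β) 1) ^ 2
                rw [show mk2 r (r ^ β) 0 = r from rfl]; linarith)
          calc r / K ≤ r := div_le_self hr0.le hK.le
          _ ≤ _ := this
        · -- upper norm bound
          rw [norm2, show mk2 r (r ^ β) 0 = r from rfl, show mk2 r (r ^ β) 1 = r ^ β from rfl]
          calc Real.sqrt (r ^ 2 + (r ^ β) ^ 2) ≤ Real.sqrt ((r + r ^ β) ^ 2) :=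
              Real.sqrt_le_sqrt (by nlinarith)
          _ = r + r ^ β := Real.sqrt_sq (by positivity)
          _ ≤ K * r := by nlinarith
        · rw [dist2, show mk2 r 0 0 = r from rfl, show mk2 r 0 1 = 0 from rfl,
            show mk2 r (r ^ β) 0 = r from rfl, show mk2 r (r ^ β) 1 = r ^ β from rfl]
          have : Real.sqrt ((r - r) ^ 2 + (0 - r ^ β) ^ 2) = r ^ β := by
            rw [show ((r - r) ^ 2 + (0 - r ^ β) ^ 2 : ℝ) = (r ^ β) ^ 2 by ring,
              Real.sqrt_sq hrb.le]
          rw [this]; nlinarith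
    -- assemble the two-sided bound from the witnesses
    have hmem : dist (mk2 r 0) q ∈
        (fun p : EuclideanSpace ℝ (Fin 2) × EuclideanSpace ℝ (Fin 2) => dist p.1 p.2) ''
          (annPiece K r Γ₁) ×ˢ (annPiece K r Γ₂) :=
      ⟨(mk2 r 0, q), ⟨hp, hq⟩, rfl⟩
    have hbdd : BddBelow
        ((fun p : EuclideanSpace ℝ (Fin 2) × EuclideanSpace ℝ (Fin 2) => dist p.1 p.2) ''
          (annPiece K r Γ₁) ×ˢ (annPiece K r Γ₂)) := by
      refine ⟨0, ?_⟩
      rintro z ⟨⟨a, b⟩, -, rfl⟩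
      exact dist_nonneg
    constructor
    · apply le_csInf ⟨_, hmem⟩
      rintro z ⟨⟨a, b⟩, ⟨ha, hb⟩, rfl⟩
      exact lower_bound β K hβ hK r hr0 a b ha hb
    · exact le_trans (csInf_le hbdd hmem) hdq
  -- squeeze
  apply tendsto_of_tendsto_of_tendsto_of_le_of_le'
    (aux_tendsto (Real.log c) β) (aux_tendsto (Real.log (2 * K)) β)
  · filter_upwards [key, Filter.eventually_gt_atTop (1:ℝ)] with r hkey hr1
    have hr0 : (0:ℝ) < r := by linarith
    have hlog : 0 < Real.log r := Real.log_pos hr1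
    have hrb : (0:ℝ) < r ^ β := Real.rpow_pos_of_pos hr0 β
    have hD0 : 0 < setDist (annPiece K r Γ₁) (annPiece K r Γ₂) :=
      lt_of_lt_of_le (by positivity) hkey.1
    have e1 : Real.log c + β * Real.log r = Real.log (c * r ^ β) := by
      rw [Real.log_mul hc.ne' hrb.ne', Real.log_rpow hr0]
    rw [e1]
    gcongr
    exact hkey.1
  · filter_upwards [key, Filter.eventually_gt_atTop (1:ℝ)] with r hkey hr1
    have hr0 : (0:ℝ) < r := by linarith
    have hlog : 0 < Real.log r := Real.log_pos hr1
    have hrb : (0:ℝ) < r ^ β := Real.rpow_pos_of_pos hr0 β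
    have hD0 : 0 < setDist (annPiece K r Γ₁) (annPiece K r Γ₂) :=
      lt_of_lt_of_le (by positivity) hkey.1
    have e2 : Real.log (2 * K) + β * Real.log r = Real.log ((2 * K) * r ^ β) := by
      rw [Real.log_mul (by positivity) hrb.ne', Real.log_rpow hr0]
    rw [e2]
    gcongr
    exact hkey.2
end
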